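/- The sequence (t_k)_{k≥0} is strictly decreasing, and 0 < t_k < τ for every k ≥ 1. -/
import Mathlib


open Filter Finset

/-- `φ(t) = ∑_{j≥0} a_j t^j`. -/
noncomputable def phiFun (a : ℕ → ℝ) (t : ℝ) : ℝ := ∑' j : ℕ, a j * t ^ j

/-- `φ'(t) = ∑_{j≥0} j·a_j·t^{j-1}`. -/
noncomputable def phiDeriv (a : ℕ → ℝ) (t : ℝ) : ℝ := ∑' j : ℕ, (j : ℝ) * a j * t ^ (j - 1)

/-- The sequence `(t_k)_{k≥0}` is strictly decreasing,
and `0 < t_k < τ` for every `k ≥ 1`. -/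
theorem stmt_0 (a : ℕ → ℝ) (ha : ∀ j, 0 ≤ a j) (ha0 : 0 < a 0)
    (ha2 : ∃ j, 2 ≤ j ∧ 0 < a j) (R : ℝ) (hR : 0 < R)
    (hconv : ∀ s : ℝ, |s| < R → Summable fun j : ℕ => a j * s ^ j)
    (hdiv : ∀ s : ℝ, R < |s| → ¬ Summable fun j : ℕ => a j * s ^ j)
    (τ : ℝ) (hτ : τ ∈ Set.Ioo 0 R)
    (hcrit : τ * phiDeriv a τ = phiFun a τ)
    (ρ : ℝ) (hρ : ρ = τ / phiFun a τ)
    (t : ℕ → ℝ) (ht0 : t 0 = τ)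
    (htrec : ∀ k : ℕ, t (k + 1) = ρ * (phiFun a (t k) - a 0)) :
    StrictAnti t ∧ ∀ k : ℕ, 1 ≤ k → 0 < t k ∧ t k < τ := by
  obtain ⟨hτ0, hτR⟩ := hτ
  obtain ⟨j0, hj02, hj0pos⟩ := ha2
  -- φ is strictly bigger than a 0 at positive points below R
  have hgt : ∀ x : ℝ, 0 < x → x < R → a 0 < phiFun a x := by
    intro x hx hxR
    have hsum : Summable fun j : ℕ => a j * x ^ j := by
      apply hconv; rwa [abs_of_pos hx]
    have : (∑' j : ℕ, (if j = 0 then a 0 else 0)) < phiFun a x := by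
      apply Summable.tsum_lt_tsum_of_nonneg (i := j0)
      · intro b; split <;> [exact ha0.le; exact le_refl 0]
      · intro b
        rcases eq_or_ne b 0 with hb | hb
        · simp [hb]
        · simp only [hb, if_false]
          exact mul_nonneg (ha b) (pow_nonneg hx.le b)
      · have : j0 ≠ 0 := by omega
        simp only [this, if_false]
        exact mul_pos hj0pos (pow_pos hx j0)
      · exact hsum
    calc a 0 = ∑' j : ℕ, (if j = 0 then a 0 else 0) := by
              rw [tsum_eq_single 0 (fun b hb => by simp [hb])]; simp
      _ < phiFun a x := this
  -- φ is strictly monotone on [0, R)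
  have hmono : ∀ x y : ℝ, 0 ≤ x → x < y → y < R → phiFun a x < phiFun a y := by
    intro x y hx hxy hyR
    have hy : 0 < y := lt_of_le_of_lt hx hxy
    have hsumy : Summable fun j : ℕ => a j * y ^ j := by
      apply hconv; rwa [abs_of_pos hy]
    apply Summable.tsum_lt_tsum_of_nonneg (i := j0)
    · intro b; exact mul_nonneg (ha b) (pow_nonneg hx b)
    · intro b
      exact mul_le_mul_of_nonneg_left (pow_le_pow_left₀ hx hxy.le b) (ha b)
    · apply mul_lt_mul_of_pos_left _ hj0pos
      exact pow_lt_pow_left₀ hxy hx (by omega)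
    · exact hsumy
  have hφτ : a 0 < phiFun a τ := hgt τ hτ0 hτR
  have hφτpos : 0 < phiFun a τ := lt_trans ha0 hφτ
  have hρpos : 0 < ρ := by rw [hρ]; exact div_pos hτ0 hφτpos
  -- key invariant
  have key : ∀ k : ℕ, 0 < t (k + 1) ∧ t (k + 1) < t k ∧ t k ≤ τ := by
    intro k
    induction k with
    | zero =>
      refine ⟨?_, ?_, le_of_eq ht0⟩
      · rw [htrec 0, ht0]
        exact mul_pos hρpos (sub_pos.mpr hφτ)
      · rw [htrec 0, ht0]
        have : ρ * (phiFun a τ - a 0) < ρ * phiFun a τ :=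
          mul_lt_mul_of_pos_left (by linarith) hρpos
        have hτeq : ρ * phiFun a τ = τ := by
          rw [hρ]; field_simp
        linarith
    | succ k ih =>
      obtain ⟨h1, h2, h3⟩ := ih
      have hk1τ : t (k + 1) < τ := lt_of_lt_of_le h2 h3
      refine ⟨?_, ?_, hk1τ.le⟩
      · rw [htrec (k + 1)]
        exact mul_pos hρpos (sub_pos.mpr (hgt _ h1 (lt_trans hk1τ hτR)))
      · rw [htrec (k + 1)]
        calc ρ * (phiFun a (t (k + 1)) - a 0) < ρ * (phiFun a (t k) - a 0) := by
              apply mul_lt_mul_of_pos_left _ hρpos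
              linarith [hmono (t (k + 1)) (t k) h1.le h2 (lt_of_le_of_lt h3 hτR)]
          _ = t (k + 1) := (htrec k).symm
  have hanti : StrictAnti t := strictAnti_nat_of_succ_lt fun k => (key k).2.1
  refine ⟨hanti, fun k hk => ⟨?_, ?_⟩⟩
  · obtain ⟨m, rfl⟩ := Nat.exists_eq_add_of_le hk
    exact (key m).1.trans_eq (by ring_nf)
  · have := hanti (show 0 < k from hk)
    rwa [ht0] at this
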